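/- Let X be a topological space and let (f_n) be a sequence in C(X) with f_n ≡ 1 on X∖U_n for open sets U_n ⊊ X. If f_n converges to the zero function in the compact-open topology, then {U_n : n ∈ ℕ} is a γ_k-cover of X (assuming the family is infinite). -/

import Mathlib

open Filter Topology ContinuousMap

/-- If `f_n ≡ 1` off the proper open set `U_n` and `f_n → 0` in the compact-open
topology, and the family `{U_n}` is infinite, then `{U_n}` is a γ_k-cover of `X`. -/
theorem stmt4 {X : Type*} [TopologicalSpace X]
    (f : ℕ → C(X, ℝ)) (U : ℕ → Set X)
    (hopen : ∀ n, IsOpen (U n)) (hproper : ∀ n, U n ≠ Set.univ)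
    (hone : ∀ n, ∀ x ∉ U n, f n x = 1)
    (hconv : Tendsto f atTop (𝓝 0))
    (hinf : (Set.range U).Infinite) :
    ∀ K : Set X, IsCompact K → {n : ℕ | ¬ K ⊆ U n}.Finite := by
  intro K hK
  have h := (ContinuousMap.tendsto_iff_forall_isCompact_tendstoUniformlyOn.mp hconv) K hK
  have h2 : ∀ᶠ n in atTop, ∀ x ∈ K, dist ((0 : C(X, ℝ)) x) (f n x) < 1/2 :=
    (Metric.tendstoUniformlyOn_iff.mp h) (1/2) (by norm_num)
  have h3 : ∀ᶠ n in atTop, K ⊆ U n := by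
    filter_upwards [h2] with n hn
    intro x hx
    by_contra hxU
    have := hn x hx
    rw [hone n x hxU] at this
    simp at this
    norm_num at this
  obtain ⟨N, hN⟩ := eventually_atTop.mp h3
  apply Set.Finite.subset (Set.finite_Iio N)
  intro n hn
  simp only [Set.mem_setOf_eq] at hn
  by_contra hlt
  exact hn (hN n (le_of_not_gt (by simpa using hlt)))
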